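/- arXiv:1802.04031 — 4 statements merged into one kernel-verified Lean document; each statement's English description precedes it below -/
import Mathlib

section
/- If kr/n is not an integer, i.e., kr/n > m where m = ⌊kr/n⌋, then the MSRR cross-rack repair bandwidth is strictly less than the MSR cross-rack repair bandwidth: B*d/(k*(d - m + 1)) < B*d*(n/r)/(k*(d*n/r + n/r - k)), assuming all denominators are positive. -/
/-- If `kr/n` is not an integer, i.e. `m = ⌊kr/n⌋ < kr/n`, then the MSRR
cross-rack repair bandwidth is strictly less than the MSR one. -/
theorem msrr_lt_msr (n k r d B : ℝ) (m : ℤ)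
    (hn : 0 < n) (hk : 0 < k) (hr : 0 < r) (hd : 0 < d) (hB : 0 < B)
    (hm : m = ⌊k * r / n⌋) (hlt : (m : ℝ) < k * r / n) (hdm : (m : ℝ) ≤ d)
    (hden1 : 0 < d * (n / r) + n / r - k) (hden2 : 0 < d - (m : ℝ) + 1) :
    B * d / (k * (d - (m : ℝ) + 1)) <
      B * d * (n / r) / (k * (d * (n / r) + n / r - k)) := by
  have h1 : (m : ℝ) * n < k * r := (lt_div_iff₀ hn).mp hlt
  have h2 : (m : ℝ) * (n / r) < k := by
    rw [mul_div_assoc'] at *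
    exact (div_lt_iff₀ hr).mpr h1
  rw [div_lt_div_iff₀ (by positivity) (by positivity)]
  nlinarith [mul_pos (mul_pos (mul_pos hB hd) hk) (sub_pos.mpr h2)]
end

section
/- Suppose m = kr/n is an integer and k/n > 2/r. Then γ'_MBR - γ_MBRR > 0, where γ'_MBR = 2*B*d*n/(k*(2*d*n + 2*n - k*r - r)) and γ_MBRR = 2*B*d/(2*k*d - m*(m-1)); that is, MBRR codes have strictly less cross-rack repair bandwidth than MBR codes. -/
/-- If `m = kr/n` is an integer and `k/n > 2/r`, then MBRR codes have
strictly less cross-rack repair bandwidth than MBR codes. -/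
theorem mbrr_lt_mbr (n k r d B : ℝ) (m : ℤ)
    (hn : 0 < n) (hk : 0 < k) (hr : 0 < r) (hd : 0 < d) (hB : 0 < B)
    (hrn : r < n) (hm : (m : ℝ) = k * r / n)
    (hrate : k / n > 2 / r)
    (hden1 : 0 < k * (2 * d * n + 2 * n - k * r - r))
    (hden2 : 0 < 2 * k * d - (m : ℝ) * ((m : ℝ) - 1)) :
    2 * B * d * n / (k * (2 * d * n + 2 * n - k * r - r)) -
      2 * B * d / (2 * k * d - (m : ℝ) * ((m : ℝ) - 1)) > 0 := by
  have hkr : 2 * n < k * r := by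
    rw [gt_iff_lt, div_lt_div_iff₀ hr hn] at hrate; linarith
  have hnm : (m : ℝ) * n = k * r := by
    rw [hm]; field_simp
  rw [gt_iff_lt, sub_pos, div_lt_div_iff₀ hden2 hden1]
  have key : 0 < k * ((n - r) * (k * r - 2 * n)) :=
    mul_pos hk (mul_pos (by linarith) (by linarith))
  have hpos : 0 < 2 * B * d * (k * ((n - r) * (k * r - 2 * n))) := by positivity
  have h3 : 2 * B * d * n * (2 * k * d - (m:ℝ) * ((m:ℝ) - 1)) * n -
      2 * B * d * (k * (2 * d * n + 2 * n - k * r - r)) * n =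
      2 * B * d * (k * ((n - r) * (k * r - 2 * n))) := by
    linear_combination (2 * B * d * (n - k * r - (m:ℝ) * n)) * hnm
  have h4 : 2 * B * d * (k * (2 * d * n + 2 * n - k * r - r)) * n <
      2 * B * d * n * (2 * k * d - (m:ℝ) * ((m:ℝ) - 1)) * n := by linarith
  exact (mul_lt_mul_iff_of_pos_right hn).mp h4
end

section
/- With m = kr/n an integer, the difference γ'_MBR - γ_MBRR equals 2*B*d*k^2*r*(n - r)*(1/n - 2/(k*r)) / (k*(2*d*n + 2*n - k*r - r)*(2*k*d - m*(m-1))). Consequently γ'_MBR > γ_MBRR if and only if k/n > 2/r (given n > r and positive denominators). -/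
/-- With `m = kr/n` an integer, the difference `γ'_MBR - γ_MBRR` equals the
closed form, and consequently `γ'_MBR > γ_MBRR ↔ k/n > 2/r`. -/
theorem mbr_sub_mbrr (n k r d B : ℝ) (m : ℤ)
    (hn : 0 < n) (hk : 0 < k) (hr : 0 < r) (hd : 0 < d) (hB : 0 < B)
    (hrn : r < n) (hm : (m : ℝ) = k * r / n)
    (hden1 : 0 < k * (2 * d * n + 2 * n - k * r - r))
    (hden2 : 0 < 2 * k * d - (m : ℝ) * ((m : ℝ) - 1)) :
    (2 * B * d * n / (k * (2 * d * n + 2 * n - k * r - r)) -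
        2 * B * d / (2 * k * d - (m : ℝ) * ((m : ℝ) - 1)) =
      2 * B * d * k ^ 2 * r * (n - r) * (1 / n - 2 / (k * r)) /
        (k * (2 * d * n + 2 * n - k * r - r) *
          (2 * k * d - (m : ℝ) * ((m : ℝ) - 1)))) ∧
    (2 * B * d * n / (k * (2 * d * n + 2 * n - k * r - r)) >
        2 * B * d / (2 * k * d - (m : ℝ) * ((m : ℝ) - 1)) ↔
      k / n > 2 / r) := by
  have hn' : n ≠ 0 := hn.ne'
  have hk' : k ≠ 0 := hk.ne'
  have hr' : r ≠ 0 := hr.ne'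
  have hd1 : k * (2 * d * n + 2 * n - k * r - r) ≠ 0 := hden1.ne'
  have hd2 : 2 * k * d - (m : ℝ) * ((m : ℝ) - 1) ≠ 0 := hden2.ne'
  have heq : 2 * B * d * n / (k * (2 * d * n + 2 * n - k * r - r)) -
        2 * B * d / (2 * k * d - (m : ℝ) * ((m : ℝ) - 1)) =
      2 * B * d * k ^ 2 * r * (n - r) * (1 / n - 2 / (k * r)) /
        (k * (2 * d * n + 2 * n - k * r - r) *
          (2 * k * d - (m : ℝ) * ((m : ℝ) - 1))) := by
    rw [div_sub_div _ _ hd1 hd2]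
    congr 1
    rw [hm]
    field_simp
    ring
  refine ⟨heq, ?_⟩
  rw [gt_iff_lt, ← sub_pos, heq]
  have hpos : 0 < 2 * B * d * k ^ 2 * r * (n - r) := by
    have h0 : 0 < n - r := sub_pos.mpr hrn
    positivity
  have hDpos : (0:ℝ) < k * (2 * d * n + 2 * n - k * r - r) * (2 * k * d - (m : ℝ) * ((m : ℝ) - 1)) := mul_pos hden1 hden2
  rw [div_pos_iff_of_pos_right hDpos]
  constructor
  · intro h
    have h1 : 0 < 1 / n - 2 / (k * r) := by nlinarith [h, hpos]
    rw [gt_iff_lt, div_lt_div_iff₀ hr hn]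
    have := (sub_pos.mp h1)
    rw [div_lt_div_iff₀ (by positivity : (0:ℝ) < k * r) hn] at this
    nlinarith
  · intro h
    rw [gt_iff_lt, div_lt_div_iff₀ hr hn] at h
    have h1 : 0 < 1 / n - 2 / (k * r) := by
      rw [sub_pos, div_lt_div_iff₀ (by positivity : (0:ℝ) < k * r) hn]
      nlinarith
    positivity
end

section
/- The MBRR point satisfies the capacity equation with equality: with α = γ = B*d/((k-m)*d + m*(d - (m-1)/2)) and β = γ/d, we have k*α + Σ_{ℓ=1}^{m} min((d - ℓ + 1)*β - α, 0) = B, and moreover (d - ℓ + 1)*β - α ≤ 0 for every ℓ with 1 ≤ ℓ ≤ m. -/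
lemma icc_sum_cast (m : ℕ) :
    ∑ ℓ ∈ Finset.Icc 1 m, (ℓ : ℝ) = m * (m + 1) / 2 := by
  induction m with
  | zero => simp
  | succ n ih =>
    rw [Finset.sum_Icc_succ_top (by omega : 1 ≤ n + 1), ih]
    push_cast
    ring

/-- The MBRR point satisfies the capacity equation with equality, and every
min term is nonpositive there. -/
theorem mbrr_capacity_eq (B : ℝ) (k d m : ℕ) (α β : ℝ)
    (hB : 0 < B) (hk : 0 < k) (hd : 0 < d) (hm : 0 < m)
    (hkm : m ≤ k) (hdm : m ≤ d)
    (hden : 0 < ((k : ℝ) - m) * d + m * ((d : ℝ) - ((m : ℝ) - 1) / 2))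
    (hα : α = B * d / (((k : ℝ) - m) * d + m * ((d : ℝ) - ((m : ℝ) - 1) / 2)))
    (hβ : β = α / d) :
    ((k : ℝ) * α +
        ∑ ℓ ∈ Finset.Icc 1 m, min (((d : ℝ) - (ℓ : ℝ) + 1) * β - α) 0 = B) ∧
    ∀ ℓ ∈ Finset.Icc 1 m, ((d : ℝ) - (ℓ : ℝ) + 1) * β - α ≤ 0 := by
  have hd' : (0:ℝ) < d := by exact_mod_cast hd
  have hα0 : 0 < α := by
    rw [hα]; positivity
  have hnp : ∀ ℓ ∈ Finset.Icc 1 m, ((d : ℝ) - (ℓ : ℝ) + 1) * β - α ≤ 0 := by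
    intro ℓ hℓ
    have h1 : (1:ℝ) ≤ ℓ := by
      have := (Finset.mem_Icc.mp hℓ).1
      exact_mod_cast this
    have : ((d : ℝ) - (ℓ : ℝ) + 1) * β - α = α * (1 - ℓ) / d := by
      rw [hβ]; field_simp; ring
    rw [this]
    apply div_nonpos_of_nonpos_of_nonneg _ hd'.le
    nlinarith
  refine ⟨?_, hnp⟩
  have hsum : ∑ ℓ ∈ Finset.Icc 1 m, min (((d : ℝ) - (ℓ : ℝ) + 1) * β - α) 0
      = ∑ ℓ ∈ Finset.Icc 1 m, (((d : ℝ) - (ℓ : ℝ) + 1) * β - α) := by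
    refine Finset.sum_congr rfl fun ℓ hℓ => min_eq_left (hnp ℓ hℓ)
  rw [hsum]
  have hexp : ∑ ℓ ∈ Finset.Icc 1 m, (((d : ℝ) - (ℓ : ℝ) + 1) * β - α)
      = (m : ℝ) * (((d : ℝ) + 1) * β - α) - β * (m * (m + 1) / 2) := by
    have h1 : ∀ ℓ ∈ Finset.Icc 1 m,
        (((d : ℝ) - (ℓ : ℝ) + 1) * β - α) = (((d : ℝ) + 1) * β - α) - β * ℓ :=
      fun ℓ _ => by ring
    rw [Finset.sum_congr rfl h1, Finset.sum_sub_distrib, Finset.sum_const,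
      ← Finset.mul_sum, icc_sum_cast]
    simp [Nat.card_Icc, nsmul_eq_mul]
  have key : (k:ℝ)*α + ((m:ℝ) * (((d : ℝ) + 1) * β - α) - β * (m * (m + 1) / 2))
      = α * (((k : ℝ) - m) * d + m * ((d : ℝ) - ((m : ℝ) - 1) / 2)) / d := by
    rw [hβ]; field_simp; ring
  rw [hexp, key, hα]
  have hden' : ((k : ℝ) - m) * d + m * ((d : ℝ) - ((m : ℝ) - 1) / 2) ≠ 0 := ne_of_gt hden
  field_simp
  have h2 : (((k:ℝ) - m) * d * 2 + m * ((d:ℝ) * 2 - ((m:ℝ) - 1))) * 2 * d ≠ 0 := by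
    have he : (((k:ℝ) - m) * d * 2 + m * ((d:ℝ) * 2 - ((m:ℝ) - 1))) * 2 * d
        = (((k : ℝ) - m) * d + m * ((d : ℝ) - ((m : ℝ) - 1) / 2)) * (4 * d) := by ring
    rw [he]; positivity
  exact div_self (fun h => h2 (by linear_combination (2 * (d:ℝ)) * h))
end
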